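/- Let ζ be the circular Kesten operator associated with (β₁, β₂). Then for every m ≥ 1 and all ε₁,…,ε_m ∈ {1,*}: Ψ₁(ζ^{ε₁}⋯ζ^{ε_m}) = Σ_π Π_{π_k ∈ blocks(π)} β_{min(𝔡(π_k),2)}, where the sum ranges over all noncrossing pair partitions π of {1,…,m} whose every block {i,j} satisfies ε_i ≠ ε_j, and 𝔡(π_k) denotes the depth of the block π_k (in particular the moment vanishes when m is odd). -/

import Mathlib

noncomputable section

/-- A letter of a word in the matricially free Fock space of tracial type. -/
abbrev MLetter (r : ℕ) (L : Type*) := (Fin r × Fin r) × L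

/-- A finite nonempty chained word with letters in `J × L`. -/
structure MWord (r : ℕ) (J : Set (Fin r × Fin r)) (L : Type*) where
  head : MLetter r L
  tail : List (MLetter r L)
  headJ : head.1 ∈ J
  tailJ : ∀ x ∈ tail, x.1 ∈ J
  chain : List.Chain' (fun a b : MLetter r L => a.1.2 = b.1.1) (head :: tail)

/-- Canonical orthonormal basis index set: vacua `Ω₁,…,Ω_r` and the words. -/
abbrev MBasis (r : ℕ) (J : Set (Fin r × Fin r)) (L : Type*) := (Fin r) ⊕ (MWord r J L)

/-- The matricially free Fock space of tracial type, `ℓ²` of the basis set. -/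
abbrev MSpace (r : ℕ) (J : Set (Fin r × Fin r)) (L : Type*) :=
  lp (fun _ : MBasis r J L => ℂ) 2

/-- Canonical basis vector. -/
def mvec {r : ℕ} {J : Set (Fin r × Fin r)} {L : Type*} (i : MBasis r J L) : MSpace r J L := by
  classical exact lp.single 2 i 1

/-- The vacuum vector `Ω_q`. -/
def vac {r : ℕ} {J : Set (Fin r × Fin r)} {L : Type*} (q : Fin r) : MSpace r J L :=
  mvec (Sum.inl q)

/-- Basis vector of a word. -/
def wvec {r : ℕ} {J : Set (Fin r × Fin r)} {L : Type*} (w : MWord r J L) : MSpace r J L :=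
  mvec (Sum.inr w)

/-- The single-letter word. -/
def MWord.single {r : ℕ} {J : Set (Fin r × Fin r)} {L : Type*}
    (x : MLetter r L) (hx : x.1 ∈ J) : MWord r J L :=
  ⟨x, [], hx, (by intro y hy; cases hy), List.isChain_singleton _⟩

/-- Prepending a letter to a word. -/
def MWord.cons {r : ℕ} {J : Set (Fin r × Fin r)} {L : Type*}
    (x : MLetter r L) (hx : x.1 ∈ J) (w : MWord r J L)
    (hc : x.1.2 = w.head.1.1) : MWord r J L :=
  ⟨x, w.head :: w.tail, hx, by
      intro y hy
      rcases List.mem_cons.mp hy with h | h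
      · exact h ▸ w.headJ
      · exact w.tailJ y h,
    List.isChain_cons_cons.mpr ⟨hc, w.chain⟩⟩

/-- `T` is the matricially free creation operator `℘_{p,q}(l)` with covariance `b`:
it maps `Ω_q` to `√b·((p,q,l))`, each word starting with first index `q` to `√b` times the
word with `((p,q),l)` prepended, and all other canonical basis vectors to `0`. -/
def IsMFCreation {r : ℕ} {J : Set (Fin r × Fin r)} {L : Type*}
    (b : ℝ) (p q : Fin r) (l : L) (hpq : ((p, q) : Fin r × Fin r) ∈ J)
    (T : MSpace r J L →L[ℂ] MSpace r J L) : Prop :=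
  T (vac q) = (Real.sqrt b : ℂ) • wvec (MWord.single ((p, q), l) hpq) ∧
  (∀ q' : Fin r, q' ≠ q → T (vac q') = 0) ∧
  (∀ (w : MWord r J L) (h : w.head.1.1 = q),
      T (wvec w) = (Real.sqrt b : ℂ) • wvec (MWord.cons ((p, q), l) hpq w h.symm)) ∧
  (∀ w : MWord r J L, w.head.1.1 ≠ q → T (wvec w) = 0)

/-- The vector state `Ψ_q(a) = ⟨aΩ_q, Ω_q⟩`. -/
def PsiM {r : ℕ} {J : Set (Fin r × Fin r)} {L : Type*} (q : Fin r)
    (a : MSpace r J L →L[ℂ] MSpace r J L) : ℂ :=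
  @inner ℂ _ _ (vac q : MSpace r J L) (a (vac q))

end
/-- `x^ε` for `ε ∈ {1, *}`: `x^1 = x` (encoded `true`) and `x^* = adjoint x` (encoded `false`). -/
noncomputable def sOp {H : Type*} [NormedAddCommGroup H] [InnerProductSpace ℂ H]
    [CompleteSpace H] (ε : Bool) (x : H →L[ℂ] H) : H →L[ℂ] H :=
  if ε then x else ContinuousLinearMap.adjoint x

noncomputable section

/-- `J = {(2,1), (2,2)}` (with `1,2` encoded as `0,1 : Fin 2`). -/
def JK : Set (Fin 2 × Fin 2) := {x | x = (1, 0) ∨ x = (1, 1)}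

lemma JK21 : ((1, 0) : Fin 2 × Fin 2) ∈ JK := Or.inl rfl
lemma JK22 : ((1, 1) : Fin 2 × Fin 2) ∈ JK := Or.inr rfl

variable {m : ℕ}

/-- `σ` encodes a noncrossing pair partition of `{1,…,m}` (blocks `{i, σ i}`) all of whose
blocks `{i,j}` satisfy `ε_i ≠ ε_j`. -/
def IsAdaptedPairPartition (σ : Fin m → Fin m) (ε : Fin m → Bool) : Prop :=
  (∀ i, σ (σ i) = i) ∧ (∀ i, σ i ≠ i) ∧
  (¬ ∃ i j : Fin m, i < j ∧ j < σ i ∧ σ i < σ j) ∧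
  (∀ i : Fin m, i < σ i → ε i ≠ ε (σ i))

/-- The number of blocks outer to the block `{i, σ i}` (with `i < σ i`); the depth of the
block is this number plus one. -/
def outerCount (σ : Fin m → Fin m) (i : Fin m) : ℕ :=
  (Finset.univ.filter (fun j => j < σ j ∧ j < i ∧ σ i < σ j)).card

end


namespace CKP

noncomputable section

open scoped ComplexConjugate
open Classical

variable {r : ℕ} {J : Set (Fin r × Fin r)} {L : Type*}

local notation "⟪" x ", " y "⟫" => @inner ℂ _ _ x y

lemma mvec_def (i : MBasis r J L) :
    (mvec i : MSpace r J L) = lp.single 2 i 1 := by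
  rw [mvec]

lemma inner_mvec (i : MBasis r J L) (f : MSpace r J L) : ⟪mvec i, f⟫ = f i := by
  rw [mvec_def, lp.inner_single_left]
  simp [RCLike.inner_apply]

lemma mvec_apply (i j : MBasis r J L) :
    (mvec i : MSpace r J L) j = if j = i then 1 else 0 := by
  rw [mvec_def, lp.single_apply]
  split_ifs with h
  · subst h; simp
  · simp [h]

lemma inner_mvec_mvec (i j : MBasis r J L) :
    ⟪mvec i, mvec j⟫ = if i = j then 1 else 0 := by
  rw [inner_mvec, mvec_apply]

lemma vec_ext {x y : MSpace r J L} (h : ∀ i, ⟪mvec i, x⟫ = ⟪mvec i, y⟫) : x = y := by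
  refine lp.ext (funext fun i => ?_)
  rw [← inner_mvec i x, ← inner_mvec i y]
  exact h i


section Adjoint

variable {b : ℝ} {p q : Fin r} {l : L} {hpq : ((p, q) : Fin r × Fin r) ∈ J}
variable {T : MSpace r J L →L[ℂ] MSpace r J L}

lemma MWord.ext' {w w' : MWord r J L} (h1 : w.head = w'.head) (h2 : w.tail = w'.tail) :
    w = w' := by
  cases w; cases w'
  cases h1; cases h2
  rfl

@[simp] lemma single_head (x : MLetter r L) (hx : x.1 ∈ J) :
    (MWord.single (J := J) x hx).head = x := rfl

@[simp] lemma single_tail (x : MLetter r L) (hx : x.1 ∈ J) :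
    (MWord.single (J := J) x hx).tail = [] := rfl

@[simp] lemma cons_head (x : MLetter r L) (hx : x.1 ∈ J) (w : MWord r J L) (hc) :
    (MWord.cons x hx w hc).head = x := rfl

@[simp] lemma cons_tail (x : MLetter r L) (hx : x.1 ∈ J) (w : MWord r J L) (hc) :
    (MWord.cons x hx w hc).tail = w.head :: w.tail := rfl

lemma cons_ne_single (x : MLetter r L) (hx : x.1 ∈ J) (w : MWord r J L) (hc)
    (y : MLetter r L) (hy : y.1 ∈ J) : MWord.cons x hx w hc ≠ MWord.single y hy := by
  intro hEq
  have := congrArg MWord.tail hEq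
  simp at this

lemma cons_inj {x : MLetter r L} {hx : x.1 ∈ J} {w w' : MWord r J L} {hc hc'} :
    MWord.cons x hx w hc = MWord.cons x hx w' hc' ↔ w = w' := by
  constructor
  · intro hEq
    have := congrArg MWord.tail hEq
    simp at this
    exact MWord.ext' this.1 this.2
  · rintro rfl; rfl

/-- Compute `⟪mvec i, T† x⟫` as `⟪T (mvec i), x⟫`. -/
lemma adj_coord (x : MSpace r J L) (i : MBasis r J L) :
    ⟪mvec i, ContinuousLinearMap.adjoint T x⟫ = ⟪T (mvec i), x⟫ :=
  ContinuousLinearMap.adjoint_inner_right T (mvec i) x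

lemma adj_on_vac (hT : IsMFCreation b p q l hpq T) (q' : Fin r) :
    ContinuousLinearMap.adjoint T (vac q') = 0 := by
  apply vec_ext
  intro i
  rw [adj_coord]
  rcases i with q'' | w'
  · by_cases hq : q'' = q
    · subst hq
      rw [show (mvec (Sum.inl q'') : MSpace r J L) = vac q'' from rfl, hT.1]
      rw [inner_smul_left]
      rw [show (vac q' : MSpace r J L) = mvec (Sum.inl q') from rfl]
      rw [show (wvec (MWord.single ((p, q''), l) hpq) : MSpace r J L)
            = mvec (Sum.inr (MWord.single ((p, q''), l) hpq)) from rfl]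
      simp [inner_mvec_mvec]
    · rw [show (mvec (Sum.inl q'') : MSpace r J L) = vac q'' from rfl, hT.2.1 q'' hq]
      simp
  · by_cases hw : w'.head.1.1 = q
    · rw [show (mvec (Sum.inr w') : MSpace r J L) = wvec w' from rfl, hT.2.2.1 w' hw]
      rw [inner_smul_left]
      rw [show (vac q' : MSpace r J L) = mvec (Sum.inl q') from rfl]
      rw [show (wvec (MWord.cons ((p, q), l) hpq w' hw.symm) : MSpace r J L)
            = mvec (Sum.inr (MWord.cons ((p, q), l) hpq w' hw.symm)) from rfl]
      simp [inner_mvec_mvec]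
    · rw [show (mvec (Sum.inr w') : MSpace r J L) = wvec w' from rfl, hT.2.2.2 w' hw]
      simp

lemma adj_on_single (hT : IsMFCreation b p q l hpq T) :
    ContinuousLinearMap.adjoint T (wvec (MWord.single ((p, q), l) hpq))
      = (Real.sqrt b : ℂ) • vac q := by
  apply vec_ext
  intro i
  rw [adj_coord, inner_smul_right]
  rcases i with q'' | w'
  · by_cases hq : q'' = q
    · subst hq
      rw [show (mvec (Sum.inl q'') : MSpace r J L) = vac q'' from rfl, hT.1]
      rw [inner_smul_left]
      rw [show (wvec (MWord.single ((p, q''), l) hpq) : MSpace r J L)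
            = mvec (Sum.inr (MWord.single ((p, q''), l) hpq)) from rfl]
      rw [show (vac q'' : MSpace r J L) = mvec (Sum.inl q'') from rfl]
      simp only [inner_mvec_mvec]; simp [Complex.conj_ofReal]
    · rw [show (mvec (Sum.inl q'') : MSpace r J L) = vac q'' from rfl, hT.2.1 q'' hq]
      simp [vac, inner_mvec_mvec, hq]
  · rw [show (vac q : MSpace r J L) = mvec (Sum.inl q) from rfl]
    rw [inner_mvec_mvec]
    by_cases hw : w'.head.1.1 = q
    · rw [show (mvec (Sum.inr w') : MSpace r J L) = wvec w' from rfl, hT.2.2.1 w' hw]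
      rw [inner_smul_left]
      rw [show (wvec (MWord.cons ((p, q), l) hpq w' hw.symm) : MSpace r J L)
            = mvec (Sum.inr (MWord.cons ((p, q), l) hpq w' hw.symm)) from rfl]
      rw [show (wvec (MWord.single ((p, q), l) hpq) : MSpace r J L)
            = mvec (Sum.inr (MWord.single ((p, q), l) hpq)) from rfl]
      rw [inner_mvec_mvec, if_neg (by simp [cons_ne_single])]
      simp
    · rw [show (mvec (Sum.inr w') : MSpace r J L) = wvec w' from rfl, hT.2.2.2 w' hw]
      simp

lemma adj_on_cons (hT : IsMFCreation b p q l hpq T) (w : MWord r J L) (h : q = w.head.1.1) :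
    ContinuousLinearMap.adjoint T (wvec (MWord.cons ((p, q), l) hpq w h))
      = (Real.sqrt b : ℂ) • wvec w := by
  apply vec_ext
  intro i
  rw [adj_coord, inner_smul_right]
  rw [show (wvec w : MSpace r J L) = mvec (Sum.inr w) from rfl]
  rw [show (wvec (MWord.cons ((p, q), l) hpq w h) : MSpace r J L)
        = mvec (Sum.inr (MWord.cons ((p, q), l) hpq w h)) from rfl]
  rcases i with q'' | w'
  · rw [inner_mvec_mvec, if_neg (by simp)]
    by_cases hq : q'' = q
    · subst hq
      rw [show (mvec (Sum.inl q'') : MSpace r J L) = vac q'' from rfl, hT.1]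
      rw [inner_smul_left]
      rw [show (wvec (MWord.single ((p, q''), l) hpq) : MSpace r J L)
            = mvec (Sum.inr (MWord.single ((p, q''), l) hpq)) from rfl]
      rw [inner_mvec_mvec, if_neg (by simp [(cons_ne_single _ _ _ _ _ _).symm])]
      simp
    · rw [show (mvec (Sum.inl q'') : MSpace r J L) = vac q'' from rfl, hT.2.1 q'' hq]
      simp
  · rw [inner_mvec_mvec]
    by_cases hw : w'.head.1.1 = q
    · rw [show (mvec (Sum.inr w') : MSpace r J L) = wvec w' from rfl, hT.2.2.1 w' hw]
      rw [inner_smul_left]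
      rw [show (wvec (MWord.cons ((p, q), l) hpq w' hw.symm) : MSpace r J L)
            = mvec (Sum.inr (MWord.cons ((p, q), l) hpq w' hw.symm)) from rfl]
      rw [inner_mvec_mvec]
      by_cases hww : w' = w
      · subst hww
        rw [if_pos rfl, if_pos rfl]
        simp [Complex.conj_ofReal]
      · rw [if_neg (by simp [cons_inj, hww]), if_neg (by simp [hww])]
        simp
    · rw [show (mvec (Sum.inr w') : MSpace r J L) = wvec w' from rfl, hT.2.2.2 w' hw]
      by_cases hww : w' = w
      · exfalso
        apply hw
        rw [hww, ← h]
      · rw [if_neg (by simp [hww])]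
        simp

lemma adj_on_wvec_ne (hT : IsMFCreation b p q l hpq T) (w₀ : MWord r J L)
    (hw₀ : w₀.head ≠ ((p, q), l)) :
    ContinuousLinearMap.adjoint T (wvec w₀) = 0 := by
  apply vec_ext
  intro i
  rw [adj_coord]
  rw [show (wvec w₀ : MSpace r J L) = mvec (Sum.inr w₀) from rfl]
  rcases i with q'' | w'
  · by_cases hq : q'' = q
    · subst hq
      rw [show (mvec (Sum.inl q'') : MSpace r J L) = vac q'' from rfl, hT.1]
      rw [inner_smul_left]
      rw [show (wvec (MWord.single ((p, q''), l) hpq) : MSpace r J L)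
            = mvec (Sum.inr (MWord.single ((p, q''), l) hpq)) from rfl]
      rw [inner_mvec_mvec, if_neg (by
        simp only [ne_eq, Sum.inr.injEq]
        intro hEq
        exact hw₀ (by rw [← hEq]; rfl))]
      simp
    · rw [show (mvec (Sum.inl q'') : MSpace r J L) = vac q'' from rfl, hT.2.1 q'' hq]
      simp
  · by_cases hw : w'.head.1.1 = q
    · rw [show (mvec (Sum.inr w') : MSpace r J L) = wvec w' from rfl, hT.2.2.1 w' hw]
      rw [inner_smul_left]
      rw [show (wvec (MWord.cons ((p, q), l) hpq w' hw.symm) : MSpace r J L)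
            = mvec (Sum.inr (MWord.cons ((p, q), l) hpq w' hw.symm)) from rfl]
      rw [inner_mvec_mvec, if_neg (by
        simp only [ne_eq, Sum.inr.injEq]
        intro hEq
        exact hw₀ (by rw [← hEq]; rfl))]
      simp
    · rw [show (mvec (Sum.inr w') : MSpace r J L) = wvec w' from rfl, hT.2.2.2 w' hw]
      simp

end Adjoint

section Concrete

lemma headJ1 (w : MWord 2 JK Bool) : w.head.1.1 = 1 := by
  rcases w.headJ with h | h <;>
    rw [show w.head.1 = _ from h]

/-- The word corresponding to a stack of labels (top first). -/
def wd : Bool → List Bool → MWord 2 JK Bool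
  | l, [] => MWord.single ((1, 0), l) JK21
  | l, l' :: s => MWord.cons ((1, 1), l) JK22 (wd l' s) (headJ1 (wd l' s)).symm

/-- The state vector of a stack of labels. -/
def sv : List Bool → MSpace 2 JK Bool
  | [] => vac 0
  | l :: s => wvec (wd l s)

@[simp] lemma wd_head_nil (l : Bool) : (wd l []).head = ((1, 0), l) := rfl

@[simp] lemma wd_head_cons (l l' : Bool) (s : List Bool) :
    (wd l (l' :: s)).head = ((1, 1), l) := rfl

variable {b : ℝ} {T : MSpace 2 JK Bool →L[ℂ] MSpace 2 JK Bool}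

section Q0

variable {lbl : Bool} (hT : IsMFCreation b 1 0 lbl JK21 T)
include hT

lemma g1 : T (sv []) = (Real.sqrt b : ℂ) • sv [lbl] := hT.1

lemma g2 (l : Bool) (s : List Bool) : T (sv (l :: s)) = 0 :=
  hT.2.2.2 (wd l s) (by rw [headJ1]; decide)

lemma g3 : ContinuousLinearMap.adjoint T (sv []) = 0 := adj_on_vac hT 0

lemma g4 : ContinuousLinearMap.adjoint T (sv [lbl]) = (Real.sqrt b : ℂ) • sv [] :=
  adj_on_single hT

lemma g5 (l : Bool) (s : List Bool) (hne : s ≠ [] ∨ l ≠ lbl) :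
    ContinuousLinearMap.adjoint T (sv (l :: s)) = 0 := by
  apply adj_on_wvec_ne hT
  rcases s with _ | ⟨l', s⟩
  · rcases hne with h | h
    · exact absurd rfl h
    · simp [h]
  · intro hEq
    have h2 : ((1 : Fin 2)) = 0 := congrArg (fun x => x.1.2) hEq
    exact absurd h2 (by decide)

end Q0

section Q1

variable {lbl : Bool} (hT : IsMFCreation b 1 1 lbl JK22 T)
include hT

lemma h1 : T (sv []) = 0 := hT.2.1 0 (by decide)

lemma h2 (l : Bool) (s : List Bool) :
    T (sv (l :: s)) = (Real.sqrt b : ℂ) • sv (lbl :: l :: s) :=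
  hT.2.2.1 (wd l s) (headJ1 _)

lemma h3 : ContinuousLinearMap.adjoint T (sv []) = 0 := adj_on_vac hT 0

lemma h4 (l : Bool) (s : List Bool) :
    ContinuousLinearMap.adjoint T (sv (lbl :: l :: s)) = (Real.sqrt b : ℂ) • sv (l :: s) :=
  adj_on_cons hT (wd l s) (headJ1 _).symm

lemma h5 (l : Bool) (s : List Bool) (hne : s = [] ∨ l ≠ lbl) :
    ContinuousLinearMap.adjoint T (sv (l :: s)) = 0 := by
  apply adj_on_wvec_ne hT
  rcases s with _ | ⟨l', s⟩
  · intro hEq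
    have h2 : ((0 : Fin 2)) = 1 := congrArg (fun x => x.1.2) hEq
    exact absurd h2 (by decide)
  · rcases hne with h | h
    · exact absurd h (by simp)
    · simp [h]

end Q1

end Concrete

section GK

variable (β₁ β₂ : ℝ)

/-- Level-dependent weight `√β₁` at the bottom, `√β₂` above. -/
def cc (t : List Bool) : ℝ := if t = [] then Real.sqrt β₁ else Real.sqrt β₂

/-- Path sum for the walk on stacks: `gk k t E` is the sum over all walks reading the
word `E`, starting from stack `t`, ending at the empty stack, whose first `k` steps are
forced to be pushes.  At a letter `δ` one may push `δ`, or pop the top if it equals `!δ`. -/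
def gk : ℕ → List Bool → List Bool → ℝ
  | _, t, [] => if t = [] then 1 else 0
  | 0, t, δ :: E => cc β₁ β₂ t * gk 0 (δ :: t) E +
      (match t with
       | [] => 0
       | lb :: t' => if lb = !δ then cc β₁ β₂ t' * gk 0 t' E else 0)
  | (k + 1), t, δ :: E => cc β₁ β₂ t * gk k (δ :: t) E

@[simp] lemma gk_nil (k : ℕ) (t : List Bool) :
    gk β₁ β₂ k t [] = if t = [] then 1 else 0 := by
  cases k <;> rfl

lemma gk_zero_cons (t : List Bool) (δ : Bool) (E : List Bool) :
    gk β₁ β₂ 0 t (δ :: E) = cc β₁ β₂ t * gk β₁ β₂ 0 (δ :: t) E +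
      (match t with
       | [] => 0
       | lb :: t' => if lb = !δ then cc β₁ β₂ t' * gk β₁ β₂ 0 t' E else 0) := rfl

lemma gk_zero_nil_cons (δ : Bool) (E : List Bool) :
    gk β₁ β₂ 0 [] (δ :: E) = cc β₁ β₂ [] * gk β₁ β₂ 0 [δ] E := by
  rw [gk_zero_cons]; simp

lemma gk_zero_cons_cons (lb : Bool) (t' : List Bool) (δ : Bool) (E : List Bool) :
    gk β₁ β₂ 0 (lb :: t') (δ :: E) = cc β₁ β₂ (lb :: t') * gk β₁ β₂ 0 (δ :: lb :: t') E +
      (if lb = !δ then cc β₁ β₂ t' * gk β₁ β₂ 0 t' E else 0) := rfl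

lemma gk_succ_cons (k : ℕ) (t : List Bool) (δ : Bool) (E : List Bool) :
    gk β₁ β₂ (k + 1) t (δ :: E) = cc β₁ β₂ t * gk β₁ β₂ k (δ :: t) E := rfl

end GK

section OpSide

variable {β₁ β₂ : ℝ}
variable {C21 C21' C22 C22' : MSpace 2 JK Bool →L[ℂ] MSpace 2 JK Bool}

@[simp] lemma sOp_true {H : Type*} [NormedAddCommGroup H] [InnerProductSpace ℂ H]
    [CompleteSpace H] (x : H →L[ℂ] H) : sOp true x = x := rfl

@[simp] lemma sOp_false {H : Type*} [NormedAddCommGroup H] [InnerProductSpace ℂ H]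
    [CompleteSpace H] (x : H →L[ℂ] H) : sOp false x = ContinuousLinearMap.adjoint x := rfl

lemma adjA :
    ContinuousLinearMap.adjoint
        (C21 + ContinuousLinearMap.adjoint C21' + C22 + ContinuousLinearMap.adjoint C22')
      = ContinuousLinearMap.adjoint C21 + C21' + ContinuousLinearMap.adjoint C22 + C22' := by
  simp [map_add, ContinuousLinearMap.adjoint_adjoint]

variable (hC21 : IsMFCreation β₁ 1 0 false JK21 C21)
variable (hC21' : IsMFCreation β₁ 1 0 true JK21 C21')
variable (hC22 : IsMFCreation β₂ 1 1 false JK22 C22)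
variable (hC22' : IsMFCreation β₂ 1 1 true JK22 C22')
include hC21 hC21' hC22 hC22'

lemma act (δ : Bool) (t : List Bool) :
    (sOp (!δ) (C21 + ContinuousLinearMap.adjoint C21'
        + C22 + ContinuousLinearMap.adjoint C22')) (sv t)
      = (cc β₁ β₂ t : ℂ) • sv (δ :: t) +
        (match t with
         | [] => (0 : MSpace 2 JK Bool)
         | lb :: t' => if lb = !δ then (cc β₁ β₂ t' : ℂ) • sv t' else 0) := by
  cases δ
  · -- δ = false : apply `A` itself; it pushes label `false`, pops label `true`
    rw [show (!false) = true from rfl, sOp_true]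
    rw [ContinuousLinearMap.add_apply, ContinuousLinearMap.add_apply,
      ContinuousLinearMap.add_apply]
    rcases t with _ | ⟨lb, (_ | ⟨l2, t2⟩)⟩
    · rw [g1 hC21, g3 hC21', h1 hC22, h3 hC22']
      simp [cc]
    · rw [g2 hC21, h2 hC22]
      cases lb
      · rw [g5 hC21' _ _ (Or.inr (by simp)), h5 hC22' _ _ (Or.inl rfl)]
        simp [cc]
      · rw [g4 hC21', h5 hC22' _ _ (Or.inl rfl)]
        simp [cc]
        abel
    · rw [g2 hC21, h2 hC22, g5 hC21' _ _ (Or.inl (by simp))]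
      cases lb
      · rw [h5 hC22' _ _ (Or.inr (by simp))]
        simp [cc]
      · rw [h4 hC22']
        simp [cc]
  · -- δ = true : apply the adjoint; it pushes label `true`, pops label `false`
    rw [show (!true) = false from rfl, sOp_false, adjA]
    rw [ContinuousLinearMap.add_apply, ContinuousLinearMap.add_apply,
      ContinuousLinearMap.add_apply]
    rcases t with _ | ⟨lb, (_ | ⟨l2, t2⟩)⟩
    · rw [g3 hC21, g1 hC21', h3 hC22, h1 hC22']
      simp [cc]
    · rw [g2 hC21', h2 hC22']
      cases lb
      · rw [g4 hC21, h5 hC22 _ _ (Or.inl rfl)]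
        simp [cc]
        abel
      · rw [g5 hC21 _ _ (Or.inr (by simp)), h5 hC22 _ _ (Or.inl rfl)]
        simp [cc]
    · rw [g2 hC21', h2 hC22', g5 hC21 _ _ (Or.inl (by simp))]
      cases lb
      · rw [h4 hC22]
        simp [cc]
        abel
      · rw [h5 hC22 _ _ (Or.inr (by simp))]
        simp [cc]

lemma inner_prod_eq (E : List Bool) : ∀ t : List Bool,
    (@inner ℂ _ _ (sv t)
      (((E.map (fun δ => sOp δ (C21 + ContinuousLinearMap.adjoint C21'
          + C22 + ContinuousLinearMap.adjoint C22'))).prod) (vac 0)))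
      = ((gk β₁ β₂ 0 t E : ℝ) : ℂ) := by
  induction E with
  | nil =>
    intro t
    rw [List.map_nil, List.prod_nil, ContinuousLinearMap.one_apply]
    rcases t with _ | ⟨l, s⟩
    · rw [show (sv [] : MSpace 2 JK Bool) = mvec (Sum.inl 0) from rfl,
        show (vac 0 : MSpace 2 JK Bool) = mvec (Sum.inl 0) from rfl, inner_mvec_mvec]
      simp
    · rw [show (sv (l :: s) : MSpace 2 JK Bool) = mvec (Sum.inr (wd l s)) from rfl,
        show (vac 0 : MSpace 2 JK Bool) = mvec (Sum.inl 0) from rfl, inner_mvec_mvec]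
      simp
  | cons δ E ih =>
    intro t
    rw [List.map_cons, List.prod_cons, ContinuousLinearMap.mul_apply]
    have hadj : ContinuousLinearMap.adjoint (sOp δ (C21 + ContinuousLinearMap.adjoint C21'
        + C22 + ContinuousLinearMap.adjoint C22'))
        = sOp (!δ) (C21 + ContinuousLinearMap.adjoint C21'
          + C22 + ContinuousLinearMap.adjoint C22') := by
      cases δ
      · rw [sOp_false, ContinuousLinearMap.adjoint_adjoint]; rfl
      · rfl
    rw [← ContinuousLinearMap.adjoint_inner_left, hadj, act hC21 hC21' hC22 hC22']
    rw [inner_add_left, inner_smul_left, ih]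
    rcases t with _ | ⟨lb, t'⟩
    · rw [gk_zero_nil_cons]
      simp [Complex.conj_ofReal]
    · dsimp only
      rw [gk_zero_cons_cons]
      by_cases h : lb = !δ
      · rw [if_pos h, if_pos h, inner_smul_left, ih]
        push_cast
        rw [Complex.conj_ofReal, Complex.conj_ofReal]
      · rw [if_neg h, if_neg h]
        simp [Complex.conj_ofReal]

end OpSide

section GKRec

variable {β₁ β₂ : ℝ} (hβ₁ : 0 ≤ β₁) (hβ₂ : 0 ≤ β₂)

lemma gk_all_up (E : List Bool) : ∀ (k : ℕ) (t : List Bool), E.length ≤ k →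
    gk β₁ β₂ k t E = if E = [] ∧ t = [] then 1 else 0 := by
  induction E with
  | nil =>
    intro k t _
    rw [gk_nil]
    simp
  | cons δ E ih =>
    intro k t hk
    cases k with
    | zero => simp at hk
    | succ k =>
      rw [gk_succ_cons, ih k (δ :: t) (by simpa using hk)]
      simp

include hβ₁ hβ₂ in
lemma cc_sq (t : List Bool) :
    cc β₁ β₂ t * cc β₁ β₂ t = if t = [] then β₁ else β₂ := by
  rcases t with _ | ⟨a, t⟩ <;> simp [cc, Real.mul_self_sqrt, hβ₁, hβ₂]

include hβ₁ hβ₂ in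
lemma gk_swap (A : List Bool) : ∀ (t : List Bool) (x y : Bool) (E₂ : List Bool),
    gk β₁ β₂ (A.length + 1) t (A ++ x :: y :: E₂)
      = gk β₁ β₂ (A.length + 2) t (A ++ x :: y :: E₂) +
        (if x = !y then (if A.length = 0 ∧ t = [] then β₁ else β₂)
            * gk β₁ β₂ A.length t (A ++ E₂) else 0) := by
  induction A with
  | nil =>
    intro t x y E₂
    simp only [List.nil_append, List.length_nil]
    rw [gk_succ_cons, gk_zero_cons_cons, gk_succ_cons, gk_succ_cons]
    rw [mul_add]
    congr 1
    by_cases hc : x = !y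
    · rw [if_pos hc, if_pos hc, ← mul_assoc, cc_sq hβ₁ hβ₂]
      congr 1
      simp
    · rw [if_neg hc, if_neg hc, mul_zero]
  | cons a A ih =>
    intro t x y E₂
    simp only [List.cons_append, List.length_cons]
    rw [gk_succ_cons, gk_succ_cons, gk_succ_cons]
    rw [ih (a :: t) x y E₂]
    rw [mul_add]
    congr 1
    by_cases hc : x = !y
    · rw [if_pos hc, if_pos hc,
        if_neg (by simp : ¬(A.length = 0 ∧ (a :: t : List Bool) = [])),
        if_neg (by simp : ¬(A.length + 1 = 0 ∧ (t : List Bool) = []))]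
      ring
    · rw [if_neg hc, if_neg hc, mul_zero]

include hβ₁ hβ₂ in
lemma gkC (E : List Bool) (k : ℕ) (hk1 : 1 ≤ k) (hkE : k < E.length) :
    gk β₁ β₂ k [] E = gk β₁ β₂ (k + 1) [] E +
      (if E.getD (k - 1) false = !(E.getD k false)
       then (if k = 1 then β₁ else β₂) * gk β₁ β₂ (k - 1) [] (E.take (k - 1) ++ E.drop (k + 1))
       else 0) := by
  have hk1' : k - 1 < E.length := by omega
  have hkE' : k < E.length := hkE
  have hx : E.getD (k - 1) false = E[k - 1]'hk1' := List.getD_eq_getElem _ _ hk1'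
  have hy : E.getD k false = E[k]'hkE' := List.getD_eq_getElem _ _ hkE'
  have hdrop1 : E.drop (k - 1) = E[k - 1]'hk1' :: E.drop k := by
    rw [List.drop_eq_getElem_cons hk1', show k - 1 + 1 = k by omega]
  have hdrop2 : E.drop k = E[k]'hkE' :: E.drop (k + 1) := by
    rw [List.drop_eq_getElem_cons hkE']
  have hE : E = E.take (k - 1) ++ E[k - 1]'hk1' :: E[k]'hkE' :: E.drop (k + 1) := by
    conv_lhs => rw [← List.take_append_drop (k - 1) E]
    rw [hdrop1, hdrop2]
  have hlen : (E.take (k - 1)).length = k - 1 := by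
    rw [List.length_take]
    omega
  have hsw := gk_swap hβ₁ hβ₂ (E.take (k - 1)) [] (E[k - 1]'hk1') (E[k]'hkE') (E.drop (k + 1))
  rw [hlen] at hsw
  rw [show k - 1 + 1 = k by omega, show k - 1 + 2 = k + 1 by omega] at hsw
  rw [hx, hy]
  conv_lhs => rw [hE]
  rw [hsw, ← hE]
  congr 1
  by_cases hc : E[k - 1]'hk1' = !(E[k]'hkE')
  · rw [if_pos hc, if_pos hc]
    congr 1
    split_ifs with hA hB hB
    · rfl
    · exfalso; rcases hA with ⟨hA1, -⟩; omega
    · exact absurd ⟨by omega, rfl⟩ hA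
    · rfl
  · rw [if_neg hc, if_neg hc]

end GKRec

section SigmaSide

open Finset

/-- Weight of an adapted noncrossing pair partition. -/
noncomputable def wOf (β₁ β₂ : ℝ) {n : ℕ} (σ : Fin n → Fin n) : ℝ :=
  ∏ i ∈ Finset.univ.filter (fun i : Fin n => i < σ i),
    (if outerCount σ i = 0 then β₁ else β₂)

open Classical in
/-- Sum of weights over adapted noncrossing pair partitions that ascend below `k`. -/
noncomputable def ASum (β₁ β₂ : ℝ) {n : ℕ} (ε : Fin n → Bool) (k : ℕ) : ℝ :=
  ∑ σ ∈ Finset.univ.filter (fun σ : Fin n → Fin n =>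
      IsAdaptedPairPartition σ ε ∧ ∀ i : Fin n, i.val < k → i < σ i), wOf β₁ β₂ σ

/-- The monotone embedding of `Fin n'` into `Fin (n' + 2)` skipping `j` and `j + 1`. -/
def iot (j : ℕ) {n' : ℕ} (i : Fin n') : Fin (n' + 2) :=
  if i.val < j then ⟨i.val, by omega⟩ else ⟨i.val + 2, by omega⟩

lemma iot_val (j : ℕ) {n' : ℕ} (i : Fin n') :
    (iot j i).val = if i.val < j then i.val else i.val + 2 := by
  unfold iot
  split_ifs <;> rfl

lemma iot_ne (j : ℕ) {n' : ℕ} (i : Fin n') :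
    (iot j i).val ≠ j ∧ (iot j i).val ≠ j + 1 := by
  rw [iot_val]
  split_ifs with h <;> omega

lemma iot_lt_iff (j : ℕ) {n' : ℕ} (i i' : Fin n') :
    iot j i < iot j i' ↔ i < i' := by
  rw [Fin.lt_def, Fin.lt_def, iot_val, iot_val]
  split_ifs <;> omega

lemma iot_inj (j : ℕ) {n' : ℕ} {i i' : Fin n'} (h : iot j i = iot j i') : i = i' := by
  have := congrArg Fin.val h
  rw [iot_val, iot_val] at this
  apply Fin.ext
  split_ifs at this <;> omega

lemma iot_lt_j_iff (j : ℕ) {n' : ℕ} (i : Fin n') :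
    (iot j i).val < j ↔ i.val < j := by
  rw [iot_val]
  split_ifs <;> omega

lemma iot_surj (j : ℕ) {n' : ℕ} (hj : j + 1 < n' + 2) (a : Fin (n' + 2))
    (h1 : a.val ≠ j) (h2 : a.val ≠ j + 1) : ∃ i : Fin n', iot j i = a := by
  by_cases hlt : a.val < j
  · exact ⟨⟨a.val, by omega⟩, by apply Fin.ext; rw [iot_val]; simp [hlt]⟩
  · refine ⟨⟨a.val - 2, by omega⟩, ?_⟩
    apply Fin.ext
    rw [iot_val]
    have : ¬ (a.val - 2 < j) := by omega
    rw [if_neg this]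
    show a.val - 2 + 2 = a.val
    omega

/-- Deleting positions `j` and `j+1` from the word `ε`. -/
def delE (j : ℕ) {n' : ℕ} (ε : Fin (n' + 2) → Bool) : Fin n' → Bool :=
  fun i => ε (iot j i)

/-- First-descent lemma: if `σ` is adapted and ascends strictly below `k`, and descends
at `k`, then `k` is paired with `k - 1`. -/
lemma first_descent {n : ℕ} {σ : Fin n → Fin n} {ε : Fin n → Bool}
    (hA : IsAdaptedPairPartition σ ε) {k : ℕ} (hk : k < n)
    (hasc : ∀ i : Fin n, i.val < k → i < σ i) (hdesc : σ ⟨k, hk⟩ < ⟨k, hk⟩) :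
    (σ ⟨k, hk⟩).val = k - 1 := by
  have hdv : (σ ⟨k, hk⟩).val < k := hdesc
  have hk1 : 1 ≤ k := by omega
  by_contra hne
  have hlt : (σ ⟨k, hk⟩).val < k - 1 := by omega
  set a : Fin n := ⟨k - 1, by omega⟩ with ha
  have hav : a.val = k - 1 := rfl
  have haa : a.val < (σ a).val := hasc a (by omega)
  have hane : (σ a).val ≠ k := by
    intro hEq
    have h2 : σ (σ a) = σ ⟨k, hk⟩ := by
      congr 1
      exact Fin.ext hEq
    rw [hA.1] at h2
    have h3 := congrArg Fin.val h2
    rw [hav] at h3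
    omega
  apply hA.2.2.1
  refine ⟨σ ⟨k, hk⟩, a, ?_, ?_, ?_⟩
  · show (σ ⟨k, hk⟩).val < a.val
    omega
  · show a.val < (σ (σ ⟨k, hk⟩)).val
    rw [hA.1]
    show a.val < k
    omega
  · show (σ (σ ⟨k, hk⟩)).val < (σ a).val
    rw [hA.1]
    show k < (σ a).val
    omega

open Classical in
lemma ASum_hi (β₁ β₂ : ℝ) {n : ℕ} (ε : Fin n → Bool) (k : ℕ) (hnk : n ≤ k) :
    ASum β₁ β₂ ε k = if n = 0 then 1 else 0 := by
  rcases Nat.eq_zero_or_pos n with hn | hn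
  · subst hn
    rw [if_pos rfl]
    rw [ASum]
    have hfil : (Finset.univ.filter (fun σ : Fin 0 → Fin 0 =>
        IsAdaptedPairPartition σ ε ∧ ∀ i : Fin 0, i.val < k → i < σ i)) = Finset.univ := by
      rw [Finset.filter_eq_self]
      intro σ _
      refine ⟨⟨fun i => i.elim0, fun i => i.elim0, ?_, fun i => i.elim0⟩, fun i => i.elim0⟩
      rintro ⟨i, -⟩
      exact i.elim0
    rw [hfil]
    have : ∀ σ : Fin 0 → Fin 0, wOf β₁ β₂ σ = 1 := by
      intro σ
      rw [wOf]
      rw [show (Finset.univ : Finset (Fin 0)) = ∅ from rfl]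
      simp
    rw [Finset.sum_congr rfl (fun σ _ => this σ)]
    simp [Finset.card_univ]
  · rw [if_neg (by omega)]
    rw [ASum]
    rw [Finset.filter_eq_empty_iff.mpr, Finset.sum_empty]
    rintro σ - ⟨hA, hasc⟩
    have hlast := hasc ⟨n - 1, by omega⟩ (by simp; omega)
    have : (σ ⟨n - 1, by omega⟩).val < n := (σ _).isLt
    have h2 : (n - 1 : ℕ) < (σ ⟨n - 1, by omega⟩).val := hlast
    omega

open Classical in
lemma ASum_split (β₁ β₂ : ℝ) {n : ℕ} (ε : Fin n → Bool) (k : ℕ) (hk : k < n) :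
    ASum β₁ β₂ ε k = ASum β₁ β₂ ε (k + 1) +
      ∑ σ ∈ Finset.univ.filter (fun σ : Fin n → Fin n =>
          (IsAdaptedPairPartition σ ε ∧ ∀ i : Fin n, i.val < k → i < σ i)
            ∧ σ ⟨k, hk⟩ < ⟨k, hk⟩), wOf β₁ β₂ σ := by
  classical
  rw [ASum]
  rw [← Finset.sum_filter_add_sum_filter_not
    (Finset.univ.filter (fun σ : Fin n → Fin n =>
      IsAdaptedPairPartition σ ε ∧ ∀ i : Fin n, i.val < k → i < σ i))
    (fun σ => (⟨k, hk⟩ : Fin n) < σ ⟨k, hk⟩) (wOf β₁ β₂)]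
  congr 1
  · rw [ASum, Finset.filter_filter]
    apply Finset.sum_congr _ (fun _ _ => rfl)
    apply Finset.filter_congr
    intro σ _
    constructor
    · rintro ⟨⟨hA, hasc⟩, hkk⟩
      refine ⟨hA, fun i hi => ?_⟩
      rcases Nat.lt_or_ge i.val k with h | h
      · exact hasc i h
      · have : i = ⟨k, hk⟩ := Fin.ext (show i.val = k by omega)
        rw [this]
        exact hkk
    · rintro ⟨hA, hasc⟩
      exact ⟨⟨hA, fun i hi => hasc i (by omega)⟩, hasc ⟨k, hk⟩ (by simp)⟩
  · rw [Finset.filter_filter]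
    apply Finset.sum_congr _ (fun _ _ => rfl)
    apply Finset.filter_congr
    intro σ _
    constructor
    · rintro ⟨⟨hA, hasc⟩, hkk⟩
      refine ⟨⟨hA, hasc⟩, ?_⟩
      have hne : σ ⟨k, hk⟩ ≠ ⟨k, hk⟩ := hA.2.1 _
      rcases lt_or_gt_of_ne hne with h | h
      · exact h
      · exact absurd h hkk
    · rintro ⟨⟨hA, hasc⟩, hkk⟩
      exact ⟨⟨hA, hasc⟩, not_lt_of_gt hkk⟩

section Bij

open Finset Classical

variable {n' : ℕ}

lemma tri (j : ℕ) (hj : j + 1 < n' + 2) (a : Fin (n' + 2)) :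
    a = ⟨j, by omega⟩ ∨ a = ⟨j + 1, hj⟩ ∨ ∃ i : Fin n', iot j i = a := by
  by_cases h1 : a.val = j
  · exact Or.inl (Fin.ext h1)
  by_cases h2 : a.val = j + 1
  · exact Or.inr (Or.inl (Fin.ext h2))
  · exact Or.inr (Or.inr (iot_surj j hj a h1 h2))

/-- Inserting the adjacent block `{j, j+1}` into a pair partition of `Fin n'`. -/
noncomputable def Phi (j : ℕ) (hj : j + 1 < n' + 2) (σ' : Fin n' → Fin n') :
    Fin (n' + 2) → Fin (n' + 2) :=
  fun a => if h : ∃ i : Fin n', iot j i = a then iot j (σ' (Classical.choose h))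
    else if a.val = j then ⟨j + 1, hj⟩ else ⟨j, by omega⟩

lemma Phi_iot (j : ℕ) (hj : j + 1 < n' + 2) (σ' : Fin n' → Fin n') (i : Fin n') :
    Phi j hj σ' (iot j i) = iot j (σ' i) := by
  have hex : ∃ i' : Fin n', iot j i' = iot j i := ⟨i, rfl⟩
  rw [Phi, dif_pos hex]
  congr 2
  exact iot_inj j (Classical.choose_spec hex)

lemma Phi_j (j : ℕ) (hj : j + 1 < n' + 2) (σ' : Fin n' → Fin n') (pf : j < n' + 2) :
    Phi j hj σ' ⟨j, pf⟩ = ⟨j + 1, hj⟩ := by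
  rw [Phi, dif_neg, if_pos rfl]
  rintro ⟨i, hi⟩
  exact (iot_ne j i).1 (congrArg Fin.val hi)

lemma Phi_j1 (j : ℕ) (hj : j + 1 < n' + 2) (σ' : Fin n' → Fin n') :
    Phi j hj σ' ⟨j + 1, hj⟩ = ⟨j, by omega⟩ := by
  rw [Phi, dif_neg, if_neg (show ¬(j + 1 = j) by omega)]
  rintro ⟨i, hi⟩
  exact (iot_ne j i).2 (congrArg Fin.val hi)

variable {j : ℕ} (hj : j + 1 < n' + 2) {ε : Fin (n' + 2) → Bool}

lemma sub_lt_j {σ' : Fin n' → Fin n'} (hA' : IsAdaptedPairPartition σ' (delE j ε))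
    (hasc' : ∀ i : Fin n', i.val < j → i < σ' i) :
    ∀ i : Fin n', i.val < j → j ≤ (σ' i).val := by
  intro i hi
  by_contra hc
  have h1 : i < σ' i := hasc' i hi
  have h2 : σ' i < σ' (σ' i) := hasc' (σ' i) (by omega)
  rw [hA'.1] at h2
  exact absurd h1 (not_lt_of_gt h2)

include hj in
lemma O1 (hεj : ε ⟨j, by omega⟩ ≠ ε ⟨j + 1, hj⟩)
    {σ' : Fin n' → Fin n'} (hA' : IsAdaptedPairPartition σ' (delE j ε))
    (hasc' : ∀ i : Fin n', i.val < j → i < σ' i) :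
    (IsAdaptedPairPartition (Phi j hj σ') ε ∧
      ∀ a : Fin (n' + 2), a.val < j + 1 → a < Phi j hj σ' a) ∧
    Phi j hj σ' ⟨j + 1, hj⟩ = ⟨j, by omega⟩ := by
  refine ⟨⟨⟨?_, ?_, ?_, ?_⟩, ?_⟩, Phi_j1 j hj σ'⟩
  · -- involution
    intro a
    rcases tri j hj a with rfl | rfl | ⟨i, rfl⟩
    · rw [Phi_j j hj σ', Phi_j1 j hj σ']
    · rw [Phi_j1 j hj σ', Phi_j j hj σ']
    · rw [Phi_iot, Phi_iot, hA'.1]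
  · -- no fixed point
    intro a
    rcases tri j hj a with rfl | rfl | ⟨i, rfl⟩
    · rw [Phi_j j hj σ']
      intro h
      have := congrArg Fin.val h
      simp at this
    · rw [Phi_j1 j hj σ']
      intro h
      have := congrArg Fin.val h
      simp at this
    · rw [Phi_iot]
      intro h
      exact hA'.2.1 i (iot_inj j h)
  · -- noncrossing
    rintro ⟨a, b, h1, h2, h3⟩
    rcases tri j hj a with rfl | rfl | ⟨ia, rfl⟩
    · rw [Phi_j j hj σ'] at h2
      have hv1 : j < b.val := h1
      have hv2 : b.val < j + 1 := h2
      omega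
    · rw [Phi_j1 j hj σ'] at h2
      have hv1 : j + 1 < b.val := h1
      have hv2 : b.val < j := h2
      omega
    · rw [Phi_iot] at h2 h3
      rcases tri j hj b with rfl | rfl | ⟨ib, rfl⟩
      · rw [Phi_j j hj σ'] at h3
        have hv2 : j < (iot j (σ' ia)).val := h2
        have hv3 : (iot j (σ' ia)).val < j + 1 := h3
        omega
      · rw [Phi_j1 j hj σ'] at h3
        have hv2 : j + 1 < (iot j (σ' ia)).val := h2
        have hv3 : (iot j (σ' ia)).val < j := h3
        omega
      · rw [Phi_iot] at h3
        exact hA'.2.2.1 ⟨ia, ib, (iot_lt_iff j _ _).mp h1, (iot_lt_iff j _ _).mp h2,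
          (iot_lt_iff j _ _).mp h3⟩
  · -- adapted to ε
    intro a ha
    rcases tri j hj a with rfl | rfl | ⟨ia, rfl⟩
    · rw [Phi_j j hj σ']
      exact hεj
    · rw [Phi_j1 j hj σ'] at ha ⊢
      have : (j + 1 : ℕ) < j := ha
      omega
    · rw [Phi_iot] at ha ⊢
      exact hA'.2.2.2 ia ((iot_lt_iff j _ _).mp ha)
  · -- ascending below j + 1
    intro a ha
    rcases tri j hj a with rfl | rfl | ⟨ia, rfl⟩
    · rw [Phi_j j hj σ']
      show j < j + 1
      omega
    · have : (j + 1 : ℕ) < j + 1 := ha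
      omega
    · rw [Phi_iot]
      rw [iot_lt_iff]
      apply hasc' ia
      have h1 : (iot j ia).val < j + 1 := ha
      have h2 := (iot_ne j ia).1
      have := iot_val j ia
      split_ifs at this <;> omega

lemma O2 {σ'₁ σ'₂ : Fin n' → Fin n'} (h : Phi j hj σ'₁ = Phi j hj σ'₂) : σ'₁ = σ'₂ := by
  funext i
  have := congrFun h (iot j i)
  rw [Phi_iot, Phi_iot] at this
  exact iot_inj j this

include hj in
lemma O3 {σ : Fin (n' + 2) → Fin (n' + 2)} (hA : IsAdaptedPairPartition σ ε)
    (hasc : ∀ a : Fin (n' + 2), a.val < j + 1 → a < σ a)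
    (hd : σ ⟨j + 1, hj⟩ = ⟨j, by omega⟩) :
    ∃ σ' : Fin n' → Fin n',
      (IsAdaptedPairPartition σ' (delE j ε) ∧ ∀ i : Fin n', i.val < j → i < σ' i) ∧
      Phi j hj σ' = σ := by
  have hσj : σ ⟨j, by omega⟩ = ⟨j + 1, hj⟩ := by
    have := congrArg σ hd
    rw [hA.1] at this
    exact this.symm
  have hinj : Function.Injective σ := by
    intro a b h
    have := congrArg σ h
    rwa [hA.1, hA.1] at this
  have hne1 : ∀ i : Fin n', (σ (iot j i)).val ≠ j := by
    intro i h
    have : σ (iot j i) = σ ⟨j + 1, hj⟩ := by rw [hd]; exact Fin.ext h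
    have h2 := hinj this
    exact (iot_ne j i).2 (congrArg Fin.val h2)
  have hne2 : ∀ i : Fin n', (σ (iot j i)).val ≠ j + 1 := by
    intro i h
    have : σ (iot j i) = σ ⟨j, by omega⟩ := by rw [hσj]; exact Fin.ext h
    have h2 := hinj this
    exact (iot_ne j i).1 (congrArg Fin.val h2)
  set σ' : Fin n' → Fin n' :=
    fun i => Classical.choose (iot_surj j hj (σ (iot j i)) (hne1 i) (hne2 i)) with hσ'
  have hspec : ∀ i : Fin n', iot j (σ' i) = σ (iot j i) :=
    fun i => Classical.choose_spec (iot_surj j hj (σ (iot j i)) (hne1 i) (hne2 i))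
  have hPhi : Phi j hj σ' = σ := by
    funext a
    rcases tri j hj a with rfl | rfl | ⟨i, rfl⟩
    · rw [Phi_j j hj σ', hσj]
    · rw [Phi_j1 j hj σ', hd]
    · rw [Phi_iot, hspec]
  refine ⟨σ', ⟨⟨?_, ?_, ?_, ?_⟩, ?_⟩, hPhi⟩
  · intro i
    apply iot_inj j
    rw [hspec, hspec, hA.1]
  · intro i h
    have := congrArg (iot j) h
    rw [hspec] at this
    exact hA.2.1 (iot j i) this
  · rintro ⟨ia, ib, h1, h2, h3⟩
    apply hA.2.2.1
    refine ⟨iot j ia, iot j ib, (iot_lt_iff j _ _).mpr h1, ?_, ?_⟩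
    · rw [← hspec]
      exact (iot_lt_iff j _ _).mpr h2
    · rw [← hspec, ← hspec]
      exact (iot_lt_iff j _ _).mpr h3
  · intro i hi
    show ε (iot j i) ≠ ε (iot j (σ' i))
    rw [hspec]
    apply hA.2.2.2 (iot j i)
    rw [← hspec]
    exact (iot_lt_iff j _ _).mpr hi
  · intro i hi
    rw [← iot_lt_iff j i (σ' i), hspec]
    apply hasc
    have := iot_val j i
    rw [this, if_pos hi]
    omega

include hj in
lemma O4 (β₁ β₂ : ℝ) (hεj : ε ⟨j, by omega⟩ ≠ ε ⟨j + 1, hj⟩)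
    {σ' : Fin n' → Fin n'} (hA' : IsAdaptedPairPartition σ' (delE j ε))
    (hasc' : ∀ i : Fin n', i.val < j → i < σ' i) :
    wOf β₁ β₂ (Phi j hj σ') = (if j = 0 then β₁ else β₂) * wOf β₁ β₂ σ' := by
  classical
  obtain ⟨⟨hA, hasc⟩, -⟩ := O1 hj hεj hA' hasc'
  set σ := Phi j hj σ' with hσ
  have hblocks : (univ.filter (fun a : Fin (n' + 2) => a < σ a))
      = insert (⟨j, by omega⟩ : Fin (n' + 2))
          ((univ.filter (fun i : Fin n' => i < σ' i)).image (iot j)) := by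
    ext a
    constructor
    · intro ha
      have ha' : a < σ a := (mem_filter.mp ha).2
      rcases tri j hj a with rfl | rfl | ⟨ia, rfl⟩
      · exact mem_insert_self _ _
      · rw [hσ, Phi_j1 j hj σ'] at ha'
        have : (j + 1 : ℕ) < j := ha'
        omega
      · apply mem_insert_of_mem
        rw [hσ, Phi_iot] at ha'
        exact mem_image_of_mem _ (mem_filter.mpr ⟨mem_univ _, (iot_lt_iff j _ _).mp ha'⟩)
    · intro ha
      rcases mem_insert.mp ha with h | h
      · subst h
        refine mem_filter.mpr ⟨mem_univ _, ?_⟩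
        rw [hσ, Phi_j j hj σ']
        exact Fin.mk_lt_mk.mpr (by omega)
      · obtain ⟨ia, hia, rfl⟩ := mem_image.mp h
        refine mem_filter.mpr ⟨mem_univ _, ?_⟩
        rw [hσ, Phi_iot]
        exact (iot_lt_iff j _ _).mpr (mem_filter.mp hia).2
  have hnotmem : (⟨j, by omega⟩ : Fin (n' + 2)) ∉
      (univ.filter (fun i : Fin n' => i < σ' i)).image (iot j) := by
    intro h
    obtain ⟨ia, -, hia⟩ := mem_image.mp h
    exact (iot_ne j ia).1 (congrArg Fin.val hia)
  rw [wOf, wOf, hblocks, prod_insert hnotmem,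
    prod_image (fun x _ y _ h => iot_inj j h)]
  congr 1
  · -- the weight of the inserted block `{j, j+1}` is `β₁` iff `j = 0`
    by_cases hj0 : j = 0
    · have h0 : outerCount σ ⟨j, by omega⟩ = 0 := by
        rw [outerCount, card_eq_zero, filter_eq_empty_iff]
        rintro b -
        rintro ⟨-, h2, -⟩
        have : b.val < j := h2
        omega
      rw [if_pos h0, if_pos hj0]
    · have hn1 : 1 ≤ n' := by omega
      set z : Fin n' := ⟨0, by omega⟩ with hz
      have hzv : z.val = 0 := rfl
      have hb0 : (iot j z).val = 0 := by rw [iot_val, if_pos (by omega)]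
      have hge : j ≤ (σ' z).val := sub_lt_j hA' hasc' z (by omega)
      have hmem0 : iot j z ∈ univ.filter (fun b : Fin (n' + 2) =>
            b < σ b ∧ b < ⟨j, by omega⟩ ∧ σ ⟨j, by omega⟩ < σ b) := by
        refine mem_filter.mpr ⟨mem_univ _, ?_, ?_, ?_⟩
        · exact hasc _ (by omega)
        · show (iot j z).val < j
          omega
        · rw [hσ, Phi_j j hj σ', Phi_iot]
          show j + 1 < (iot j (σ' z)).val
          rw [iot_val, if_neg (by omega)]
          omega
      have hne0 : ¬ outerCount σ ⟨j, by omega⟩ = 0 := by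
        rw [outerCount]
        exact Finset.card_ne_zero_of_mem hmem0
      rw [if_neg hne0, if_neg hj0]
  · -- per-block weights agree
    apply prod_congr rfl
    intro ia hia
    have hblock : ia < σ' ia := (mem_filter.mp hia).2
    have hiff : outerCount σ (iot j ia) = 0 ↔ outerCount σ' ia = 0 := by
      unfold outerCount
      rw [card_eq_zero, card_eq_zero, filter_eq_empty_iff, filter_eq_empty_iff]
      constructor
      · intro h ib _
        rintro ⟨c1, c2, c3⟩
        refine h (mem_univ (iot j ib)) ⟨?_, ?_, ?_⟩
        · rw [hσ, Phi_iot]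
          exact (iot_lt_iff j _ _).mpr c1
        · exact (iot_lt_iff j _ _).mpr c2
        · rw [hσ, Phi_iot, Phi_iot]
          exact (iot_lt_iff j _ _).mpr c3
      · intro h b _
        rintro ⟨c1, c2, c3⟩
        rcases tri j hj b with rfl | rfl | ⟨ib, rfl⟩
        · rw [hσ, Phi_j j hj σ', Phi_iot] at c3
          have v2 : j < (iot j ia).val := c2
          have v3 : (iot j (σ' ia)).val < j + 1 := c3
          have v4 : (iot j ia).val < (iot j (σ' ia)).val :=
            (iot_lt_iff j _ _).mpr hblock
          omega
        · rw [hσ, Phi_j1 j hj σ'] at c1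
          have : (j + 1 : ℕ) < j := c1
          omega
        · rw [hσ, Phi_iot] at c1
          rw [hσ, Phi_iot, Phi_iot] at c3
          exact h (mem_univ ib) ⟨(iot_lt_iff j _ _).mp c1, (iot_lt_iff j _ _).mp c2,
            (iot_lt_iff j _ _).mp c3⟩
    exact if_congr hiff rfl rfl

open Classical in
lemma DSum_eq (β₁ β₂ : ℝ) (hεj : ε ⟨j, by omega⟩ ≠ ε ⟨j + 1, hj⟩) :
    ∑ σ ∈ univ.filter (fun σ : Fin (n' + 2) → Fin (n' + 2) =>
        (IsAdaptedPairPartition σ ε ∧ ∀ a : Fin (n' + 2), a.val < j + 1 → a < σ a)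
          ∧ σ ⟨j + 1, hj⟩ = ⟨j, by omega⟩), wOf β₁ β₂ σ
      = (if j = 0 then β₁ else β₂) * ASum β₁ β₂ (delE j ε) j := by
  rw [ASum, Finset.mul_sum]
  symm
  apply Finset.sum_bij (fun σ' _ => Phi j hj σ')
  · intro σ' hs
    obtain ⟨hA', hasc'⟩ := (mem_filter.mp hs).2
    obtain ⟨⟨hA, hasc⟩, hd⟩ := O1 hj hεj hA' hasc'
    exact mem_filter.mpr ⟨mem_univ _, ⟨hA, hasc⟩, hd⟩
  · intro a ha b hb h
    exact O2 hj h
  · intro σ hs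
    obtain ⟨⟨hA, hasc⟩, hd⟩ := (mem_filter.mp hs).2
    obtain ⟨σ', hmem, hPhi⟩ := O3 hj hA hasc hd
    exact ⟨σ', mem_filter.mpr ⟨mem_univ _, hmem⟩, hPhi⟩
  · intro σ' hs
    obtain ⟨hA', hasc'⟩ := (mem_filter.mp hs).2
    exact (O4 hj β₁ β₂ hεj hA' hasc').symm

end Bij

end SigmaSide

section Master

open Finset

variable {β₁ β₂ : ℝ}

lemma ofFn_getD {n : ℕ} (ε : Fin n → Bool) (i : ℕ) (hi : i < n) :
    (List.ofFn ε).getD i false = ε ⟨i, hi⟩ := by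
  rw [List.getD_eq_getElem _ _ (by simpa using hi)]
  rw [List.getElem_ofFn]

lemma ofFn_del {n' : ℕ} (j : ℕ) (hj : j + 1 < n' + 2) (ε : Fin (n' + 2) → Bool) :
    (List.ofFn ε).take j ++ (List.ofFn ε).drop (j + 2) = List.ofFn (delE j ε) := by
  have hlen : (List.ofFn ε).length = n' + 2 := List.length_ofFn
  have htl : ((List.ofFn ε).take j).length = j := by
    rw [List.length_take, hlen]
    omega
  apply List.ext_getElem
  · rw [List.length_append, htl, List.length_drop, hlen, List.length_ofFn]
    omega
  · intro i h1 h2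
    have hin' : i < n' := by
      rw [List.length_append, htl, List.length_drop, hlen] at h1
      omega
    rw [List.getElem_append]
    rw [List.getElem_ofFn]
    by_cases hij : i < j
    · rw [dif_pos (show i < ((List.ofFn ε).take j).length by rw [htl]; exact hij)]
      rw [List.getElem_take, List.getElem_ofFn, delE]
      congr 1
      apply Fin.ext
      rw [iot_val]
      simp [hij]
    · rw [dif_neg (show ¬ i < ((List.ofFn ε).take j).length by rw [htl]; exact hij)]
      rw [List.getElem_drop, List.getElem_ofFn, delE]
      congr 1
      apply Fin.ext
      rw [iot_val]
      show j + 2 + (i - (List.take j (List.ofFn ε)).length) = if i < j then i else i + 2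
      rw [htl, if_neg hij]
      omega

lemma boundary (hβ₁ : 0 ≤ β₁) (hβ₂ : 0 ≤ β₂) {n : ℕ} (ε : Fin n → Bool) (k : ℕ)
    (hnk : n ≤ k) :
    gk β₁ β₂ k [] (List.ofFn ε) = ASum β₁ β₂ ε k := by
  rw [gk_all_up _ _ _ (by rw [List.length_ofFn]; omega), ASum_hi β₁ β₂ ε k hnk]
  by_cases hn : n = 0
  · subst hn
    rw [if_pos ⟨List.ofFn_eq_nil_iff.mpr rfl, rfl⟩, if_pos rfl]
  · rw [if_neg (fun hc => hn (List.ofFn_eq_nil_iff.mp hc.1)), if_neg hn]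

lemma gk01 (E : List Bool) : gk β₁ β₂ 0 [] E = gk β₁ β₂ 1 [] E := by
  cases E with
  | nil => rw [gk_nil, gk_nil]
  | cons δ E => rw [gk_zero_nil_cons, gk_succ_cons]

open Classical in
lemma ASum01 {n : ℕ} (ε : Fin n → Bool) : ASum β₁ β₂ ε 0 = ASum β₁ β₂ ε 1 := by
  rw [ASum, ASum]
  apply Finset.sum_congr _ (fun _ _ => rfl)
  apply Finset.filter_congr
  intro σ _
  constructor
  · rintro ⟨hA, -⟩
    refine ⟨hA, fun i hi => ?_⟩
    have h1 : i.val = 0 := by omega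
    have h2 : σ i ≠ i := hA.2.1 i
    have h3 : (σ i).val ≠ i.val := fun hc => h2 (Fin.ext hc)
    show i.val < (σ i).val
    omega
  · rintro ⟨hA, -⟩
    exact ⟨hA, fun i hi => absurd hi (by omega)⟩

open Classical in
lemma master (hβ₁ : 0 ≤ β₁) (hβ₂ : 0 ≤ β₂) :
    ∀ (N : ℕ) {n : ℕ} (ε : Fin n → Bool) (k : ℕ), 2 * n ≤ N + k →
      gk β₁ β₂ k [] (List.ofFn ε) = ASum β₁ β₂ ε k := by
  intro N
  induction N with
  | zero =>
    intro n ε k h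
    exact boundary hβ₁ hβ₂ ε k (by omega)
  | succ N ih =>
    intro n ε k h
    by_cases hnk : n ≤ k
    · exact boundary hβ₁ hβ₂ ε k hnk
    · push_neg at hnk
      by_cases hk0 : k = 0
      · subst hk0
        rw [gk01, ASum01]
        exact ih ε 1 (by omega)
      · have hkn : k < n := hnk
        have hlenE : k < (List.ofFn ε).length := by rw [List.length_ofFn]; omega
        rw [gkC hβ₁ hβ₂ (List.ofFn ε) k (by omega) hlenE]
        rw [ASum_split β₁ β₂ ε k hkn]
        congr 1
        · exact ih ε (k + 1) (by omega)
        · obtain ⟨n', rfl⟩ : ∃ n', n = n' + 2 := ⟨n - 2, by omega⟩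
          obtain ⟨j, rfl⟩ : ∃ j, k = j + 1 := ⟨k - 1, by omega⟩
          have hj : j + 1 < n' + 2 := hkn
          have hgd1 : (List.ofFn ε).getD (j + 1 - 1) false = ε ⟨j, by omega⟩ := by
            rw [show j + 1 - 1 = j by omega, ofFn_getD ε j (by omega)]
          have hgd2 : (List.ofFn ε).getD (j + 1) false = ε ⟨j + 1, hj⟩ :=
            ofFn_getD ε (j + 1) (by omega)
          rw [hgd1, hgd2]
          simp only [Nat.add_sub_cancel]
          by_cases hεc : ε ⟨j, by omega⟩ = !(ε ⟨j + 1, hj⟩)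
          · rw [if_pos hεc]
            have hεj : ε ⟨j, by omega⟩ ≠ ε ⟨j + 1, hj⟩ := by
              rw [hεc]
              simp
            have hfilter : (univ.filter (fun σ : Fin (n' + 2) → Fin (n' + 2) =>
                (IsAdaptedPairPartition σ ε ∧
                  ∀ i : Fin (n' + 2), i.val < j + 1 → i < σ i)
                  ∧ σ ⟨j + 1, hkn⟩ < ⟨j + 1, hkn⟩))
                = univ.filter (fun σ : Fin (n' + 2) → Fin (n' + 2) =>
                (IsAdaptedPairPartition σ ε ∧
                  ∀ i : Fin (n' + 2), i.val < j + 1 → i < σ i)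
                  ∧ σ ⟨j + 1, hj⟩ = ⟨j, by omega⟩) := by
              apply Finset.filter_congr
              intro σ _
              constructor
              · rintro ⟨⟨hA, hasc⟩, hlt⟩
                refine ⟨⟨hA, hasc⟩, ?_⟩
                apply Fin.ext
                rw [first_descent hA hkn hasc hlt]
                exact show j + 1 - 1 = j by omega
              · rintro ⟨⟨hA, hasc⟩, heq⟩
                refine ⟨⟨hA, hasc⟩, ?_⟩
                rw [heq]
                exact Fin.mk_lt_mk.mpr (by omega)
            rw [hfilter, DSum_eq hj β₁ β₂ hεj]
            have hlist : (List.ofFn ε).take j ++ (List.ofFn ε).drop (j + 1 + 1)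
                = List.ofFn (delE j ε) := by
              rw [show j + 1 + 1 = j + 2 by omega]
              exact ofFn_del j hj ε
            rw [hlist]
            rw [ih (delE j ε) j (by omega)]
            congr 1
            apply if_congr _ rfl rfl
            omega
          · rw [if_neg hεc]
            symm
            rw [Finset.filter_eq_empty_iff.mpr, Finset.sum_empty]
            rintro σ - ⟨⟨hA, hasc⟩, hlt⟩
            have hd := first_descent hA hkn hasc hlt
            have hdEq : σ ⟨j + 1, hkn⟩ = ⟨j, by omega⟩ :=
              Fin.ext (by rw [hd]; exact show j + 1 - 1 = j by omega)
            have hσj : σ ⟨j, by omega⟩ = ⟨j + 1, hkn⟩ := by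
              have := congrArg σ hdEq
              rw [hA.1] at this
              exact this.symm
            have hlt2 : (⟨j, by omega⟩ : Fin (n' + 2)) < σ ⟨j, by omega⟩ := by
              rw [hσj]
              exact Fin.mk_lt_mk.mpr (by omega)
            have hne := hA.2.2.2 _ hlt2
            rw [hσj] at hne
            apply hεc
            rcases Bool.eq_false_or_eq_true (ε ⟨j, by omega⟩) with h1 | h1 <;>
              rcases Bool.eq_false_or_eq_true (ε ⟨j + 1, hj⟩) with h2 | h2 <;>
              simp [h1, h2] at hne ⊢

end Master

end

end CKP

set_option synthInstance.maxHeartbeats 400000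
set_option maxHeartbeats 1000000

open Classical in
/-- the *-moments of the circular Kesten operator
`ζ = ℘_{2,1}(u′) + ℘_{2,1}(u″)* + ℘_{2,2}(u′) + ℘_{2,2}(u″)*` associated with `(β₁,β₂)` in the
state `Ψ₁` are given by `Ψ₁(ζ^{ε₁}⋯ζ^{ε_m}) = Σ_π Π_{blocks} β_{min(𝔡(π_k),2)}`, summing over
noncrossing pair partitions adapted to `(ε₁,…,ε_m)`. -/
theorem circularKesten_moments
    (β₁ β₂ : ℝ) (hβ₁ : 0 < β₁) (hβ₂ : 0 < β₂)
    (C21 C21' C22 C22' : MSpace 2 JK Bool →L[ℂ] MSpace 2 JK Bool)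
    (hC21 : IsMFCreation β₁ 1 0 false JK21 C21)
    (hC21' : IsMFCreation β₁ 1 0 true JK21 C21')
    (hC22 : IsMFCreation β₂ 1 1 false JK22 C22)
    (hC22' : IsMFCreation β₂ 1 1 true JK22 C22') :
    ∀ (m : ℕ), 1 ≤ m → ∀ (ε : Fin m → Bool),
      PsiM 0 (List.ofFn (fun j => sOp (ε j)
          (C21 + ContinuousLinearMap.adjoint C21'
            + C22 + ContinuousLinearMap.adjoint C22'))).prod
        = ∑ σ ∈ Finset.univ.filter (fun σ : Fin m → Fin m => IsAdaptedPairPartition σ ε),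
            ∏ i ∈ Finset.univ.filter (fun i : Fin m => i < σ i),
              ((if outerCount σ i = 0 then β₁ else β₂ : ℝ) : ℂ) := by
  intro m hm ε
  classical
  have hmap : (List.ofFn (fun j => sOp (ε j) (C21 + ContinuousLinearMap.adjoint C21'
        + C22 + ContinuousLinearMap.adjoint C22')))
      = (List.ofFn ε).map (fun δ => sOp δ (C21 + ContinuousLinearMap.adjoint C21'
        + C22 + ContinuousLinearMap.adjoint C22')) := by
    rw [List.map_ofFn]
    rfl
  rw [hmap]
  have hL : PsiM 0 (((List.ofFn ε).map (fun δ => sOp δ (C21 + ContinuousLinearMap.adjoint C21'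
        + C22 + ContinuousLinearMap.adjoint C22'))).prod)
      = ((CKP.gk β₁ β₂ 0 [] (List.ofFn ε) : ℝ) : ℂ) :=
    CKP.inner_prod_eq hC21 hC21' hC22 hC22' (List.ofFn ε) []
  rw [hL]
  have hcomb : CKP.gk β₁ β₂ 0 [] (List.ofFn ε) = CKP.ASum β₁ β₂ ε 0 := by
    rw [CKP.gk01, CKP.ASum01]
    exact CKP.master hβ₁.le hβ₂.le (2 * m) ε 1 (by omega)
  rw [hcomb, CKP.ASum, Complex.ofReal_sum]
  have hfil : (Finset.univ.filter (fun σ : Fin m → Fin m =>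
      IsAdaptedPairPartition σ ε ∧ ∀ i : Fin m, i.val < 0 → i < σ i))
      = Finset.univ.filter (fun σ : Fin m → Fin m => IsAdaptedPairPartition σ ε) := by
    apply Finset.filter_congr
    intro σ _
    constructor
    · exact fun h => h.1
    · exact fun h => ⟨h, fun i hi => absurd hi (by omega)⟩
  rw [hfil]
  apply Finset.sum_congr rfl
  intro σ _
  rw [CKP.wOf, Complex.ofReal_prod]
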